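/- Subcritical vanishing of individual weights: if β_n n^{−α} → 0 as n → ∞ (with α = 2/(d−1)), then for every fixed integer i ≥ 1, A_{(i)} → 0 in probability. -/

import Mathlib

open MeasureTheory ProbabilityTheory Real Filter Topology
open scoped RealInnerProductSpace ENNReal

noncomputable section

namespace AttnScaling

/-- ambient Euclidean space `ℝ^d` -/
abbrev Euc (d : ℕ) := EuclideanSpace ℝ (Fin d)

/-- The surface measure on the unit sphere `S^{d-1} ⊆ ℝ^d`, viewed as a measure on the
ambient space (the pushforward of `volume.toSphere` along the inclusion). -/
def surfaceMeasure (d : ℕ) : Measure (Euc d) :=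
  Measure.map Subtype.val ((volume : Measure (Euc d)).toSphere)

/-- Surface area of the unit sphere `S^{m-1} ⊆ ℝ^m`. -/
def sphereArea (m : ℕ) : ℝ :=
  (((volume : Measure (Euc m)).toSphere) Set.univ).toReal

/-- The law `ρ dσ` of a single token on the sphere. -/
def tokenLaw (d : ℕ) (ρ : Euc d → ℝ) : Measure (Euc d) :=
  (surfaceMeasure d).withDensity fun y => ENNReal.ofReal (ρ y)

/-- The tokens `x 0, x 1, …` are i.i.d. with common law `ρ dσ` on the unit sphere. -/
def IsIIDTokens (d : ℕ) {Ω : Type*} [MeasurableSpace Ω] (P : Measure Ω)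
    (ρ : Euc d → ℝ) (x : ℕ → Ω → Euc d) : Prop :=
  (∀ i, Measurable (x i)) ∧ (∀ i ω, ‖x i ω‖ = 1) ∧
    (∀ i, Measure.map (x i) P = tokenLaw d ρ) ∧
    iIndepFun x P

/-- the exponent `α = 2/(d-1)` -/
def alpha (d : ℕ) : ℝ := 2 / ((d : ℝ) - 1)

/-- the constant `C(q) = 2^{1/α} σ_{d-2} ρ(q) / (d-1)` -/
def Cq (d : ℕ) (ρ : Euc d → ℝ) (q : Euc d) : ℝ :=
  (2 : ℝ) ^ (1 / alpha d) * sphereArea (d - 1) * ρ q / ((d : ℝ) - 1)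

variable {Ω : Type*} [MeasurableSpace Ω]

/-- distance-to-query `T_i = 1 - ⟨q, x_i⟩` -/
def dtq (d : ℕ) (q : Euc d) (x : ℕ → Ω → Euc d) (i : ℕ) (ω : Ω) : ℝ :=
  1 - ⟪q, x i ω⟫

/-- the softmax partition function `Z_n = ∑_{j=1}^n e^{-β_n T_j}` -/
def zfun (d : ℕ) (β : ℕ → ℝ) (q : Euc d) (x : ℕ → Ω → Euc d) (n : ℕ) (ω : Ω) : ℝ :=
  ∑ j ∈ Finset.range n, Real.exp (-(β n * dtq d q x j ω))

/-- the attention weight `A_i = e^{-β_n T_i} / Z_n` -/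
def attn (d : ℕ) (β : ℕ → ℝ) (q : Euc d) (x : ℕ → Ω → Euc d) (n i : ℕ) (ω : Ω) : ℝ :=
  Real.exp (-(β n * dtq d q x i ω)) / zfun d β q x n ω

/-- `ordDesc w k` is the `k`-th largest entry (1-indexed) of the tuple `w`, `0` if `k-1 ≥ n`. -/
def ordDesc {n : ℕ} (w : Fin n → ℝ) (k : ℕ) : ℝ :=
  if h : k - 1 < n then (w ∘ Tuple.sort w) (Fin.rev ⟨k - 1, h⟩) else 0

/-- `attnOrd d β q x n k` is the `k`-th largest attention weight `A_{(k)}` (1-indexed)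
among the weights `A_1, …, A_n`. -/
def attnOrd (d : ℕ) (β : ℕ → ℝ) (q : Euc d) (x : ℕ → Ω → Euc d) (n k : ℕ) (ω : Ω) : ℝ :=
  ordDesc (fun i : Fin n => attn d β q x n i ω) k

section Geom

variable {d : ℕ}

lemma volume_box (a b : Fin d → ℝ) :
    volume {z : Euc d | ∀ j, z j ∈ Set.Icc (a j) (b j)} = ∏ j, ENNReal.ofReal (b j - a j) := by
  have h : {z : Euc d | ∀ j, z j ∈ Set.Icc (a j) (b j)} =
      (MeasurableEquiv.toLp 2 (Fin d → ℝ)).symm ⁻¹' (Set.univ.pi fun j => Set.Icc (a j) (b j)) := by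
    ext z; simp only [Set.mem_preimage, Set.mem_pi, Set.mem_univ, forall_true_left, Set.mem_setOf_eq]; rfl
  rw [h, (EuclideanSpace.volume_preserving_symm_measurableEquiv_toLp (Fin d)).measure_preimage
      (MeasurableSet.univ_pi fun j => measurableSet_Icc).nullMeasurableSet,
    volume_pi_pi]
  simp [Real.volume_Icc]

end Geom
open scoped Pointwise

section Geom2
variable {d : ℕ}

lemma cap_measurable (q : Euc d) (t : ℝ) :
    MeasurableSet {y : Euc d | 1 - ⟪q, y⟫ ≤ t} := by
  have hc : Continuous fun y : Euc d => 1 - ⟪q, y⟫ :=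
    continuous_const.sub (Continuous.inner continuous_const continuous_id)
  exact measurableSet_le hc.measurable measurable_const

lemma exists_onb_eq (hd : 2 ≤ d) {q : Euc d} (hq : ‖q‖ = 1) :
    ∃ b : OrthonormalBasis (Fin d) ℝ (Euc d), b ⟨0, by omega⟩ = q := by
  set i0 : Fin d := ⟨0, by omega⟩
  have hon : Orthonormal ℝ (Set.restrict {i0} (fun _ : Fin d => q)) := by
    constructor
    · intro i; exact hq
    · intro i j hij
      exact absurd (Subtype.ext (by
        have hi := i.2; have hj := j.2
        simp only [Set.mem_singleton_iff] at hi hj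
        rw [hi, hj])) hij
  obtain ⟨b, hb⟩ := Orthonormal.exists_orthonormalBasis_extension_of_card_eq
    (by simp [finrank_euclideanSpace_fin]) hon
  exact ⟨b, hb i0 rfl⟩

set_option maxHeartbeats 1600000 in
lemma sphere_cap_lower (hd : 2 ≤ d) {q : Euc d} (hq : ‖q‖ = 1) :
    ∃ c : ℝ, 0 < c ∧ ∀ t : ℝ, 0 < t → t ≤ 1 →
      ENNReal.ofReal (c * t ^ (((d : ℝ) - 1) / 2)) ≤
        surfaceMeasure d {y : Euc d | 1 - ⟪q, y⟫ ≤ t} := by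
  obtain ⟨b, hb0⟩ := exists_onb_eq hd hq
  set i0 : Fin d := ⟨0, by omega⟩ with hi0
  have hd4 : (0:ℝ) < 4 * d := by positivity
  have hsq4d : 0 < Real.sqrt (4 * d) := Real.sqrt_pos.2 hd4
  refine ⟨(d : ℝ) * ((1 / 10) * (2 / Real.sqrt (4 * d)) ^ (d - 1)), by positivity, ?_⟩
  intro t ht ht1
  set δ : ℝ := Real.sqrt (t / (4 * d)) with hδdef
  have hδpos : 0 < δ := Real.sqrt_pos.2 (by positivity)
  have hδsq : δ ^ 2 = t / (4 * d) := Real.sq_sqrt (by positivity)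
  set a : Fin d → ℝ := fun j => if j = i0 then 1/2 else -δ with ha
  set bb : Fin d → ℝ := fun j => if j = i0 then 3/5 else δ with hbb
  set B : Set (Euc d) := {z : Euc d | ∀ j, z j ∈ Set.Icc (a j) (bb j)} with hB
  have hBmeas : MeasurableSet B := by
    have : B = ⋂ j, (fun z : Euc d => z j) ⁻¹' Set.Icc (a j) (bb j) := by
      ext z; simp [hB, Set.mem_iInter]
    rw [this]
    exact MeasurableSet.iInter fun j => ((measurable_pi_apply j).comp (WithLp.measurable_ofLp 2 _)) measurableSet_Icc
  -- key inclusion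
  have hsub : ⇑b.repr ⁻¹' B ⊆
      Set.Ioo (0:ℝ) 1 • (Subtype.val '' (Subtype.val ⁻¹'
        {y : Euc d | 1 - ⟪q, y⟫ ≤ t} : Set (Metric.sphere (0 : Euc d) 1))) := by
    intro v hv
    set z : EuclideanSpace ℝ (Fin d) := b.repr v with hz
    have hz0 : z i0 = ⟪q, v⟫ := by rw [hz, b.repr_apply_apply, hb0]
    have hzj : ∀ j, a j ≤ z j ∧ z j ≤ bb j := hv
    have hz0l : (1:ℝ)/2 ≤ z i0 := by simpa [ha] using (hzj i0).1
    have hz0u : z i0 ≤ 3/5 := by simpa [hbb] using (hzj i0).2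
    have hnormsq : ‖v‖ ^ 2 = ∑ j, z j ^ 2 := by
      rw [← b.repr.norm_map v, ← hz, EuclideanSpace.norm_eq,
        Real.sq_sqrt (by positivity)]
      simp [sq_abs]
    have hsum_rest : ∑ j ∈ Finset.univ.erase i0, z j ^ 2 ≤ (d : ℝ) * δ ^ 2 := by
      calc ∑ j ∈ Finset.univ.erase i0, z j ^ 2
          ≤ ∑ _j ∈ Finset.univ.erase i0, δ ^ 2 := by
            refine Finset.sum_le_sum fun j hj => ?_
            have hj0 : j ≠ i0 := (Finset.mem_erase.1 hj).1
            have h1 := (hzj j).1; have h2 := (hzj j).2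
            simp only [ha, hbb, if_neg hj0] at h1 h2
            nlinarith
        _ ≤ (d : ℝ) * δ ^ 2 := by
            rw [Finset.sum_const, nsmul_eq_mul]
            have hcard : ((Finset.univ.erase i0).card : ℝ) ≤ d := by
              have h := Finset.card_erase_le (s := (Finset.univ : Finset (Fin d))) (a := i0)
              simp only [Finset.card_univ, Fintype.card_fin] at h
              exact_mod_cast h
            nlinarith [sq_nonneg δ]
    have hnormsq' : ‖v‖ ^ 2 ≤ z i0 ^ 2 + t / 4 := by
      have hsplit : ∑ j, z j ^ 2 = z i0 ^ 2 + ∑ j ∈ Finset.univ.erase i0, z j ^ 2 := by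
        rw [← Finset.add_sum_erase _ _ (Finset.mem_univ i0)]
      have hdd : (d : ℝ) * δ ^ 2 = t / 4 := by
        rw [hδsq]; field_simp
      rw [hnormsq, hsplit]
      nlinarith [hsum_rest]
    have hvnorm1 : ‖v‖ < 1 := by nlinarith [norm_nonneg v, hnormsq', hz0u, hz0l, ht1, ht]
    have hvpos : 0 < ‖v‖ := by
      rcases eq_or_ne v 0 with h | h
      · exfalso
        rw [h] at hz
        simp only [map_zero] at hz
        have : z i0 = 0 := by rw [hz]; rfl
        linarith
      · exact norm_pos_iff.2 h
    have hsqle : ((1-t) * ‖v‖) ^ 2 ≤ z i0 ^ 2 := by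
      have hs2l : (1:ℝ)/4 ≤ z i0 ^ 2 := by nlinarith
      have hs2u : z i0 ^ 2 ≤ 9/25 := by nlinarith
      have h1 := mul_le_mul_of_nonneg_left hnormsq' (sq_nonneg (1-t))
      have h2 := mul_le_mul_of_nonneg_left hs2l ht.le
      have h3 := mul_le_mul_of_nonneg_left hs2u (sq_nonneg t)
      have ht3 : t^3 ≤ t := by nlinarith
      nlinarith [h1, h2, h3, ht3, ht.le, ht1]
    have hkey : (1 - t) * ‖v‖ ≤ z i0 := by
      have h1 : Real.sqrt (((1-t) * ‖v‖) ^ 2) ≤ Real.sqrt (z i0 ^ 2) := Real.sqrt_le_sqrt hsqle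
      rwa [Real.sqrt_sq (by nlinarith [norm_nonneg v]), Real.sqrt_sq (by linarith)] at h1
    refine Set.mem_smul.2 ⟨‖v‖, ⟨hvpos, hvnorm1⟩, ‖v‖⁻¹ • v, ?_, ?_⟩
    · refine ⟨⟨‖v‖⁻¹ • v, ?_⟩, ?_, rfl⟩
      · rw [mem_sphere_zero_iff_norm, norm_smul, norm_inv, norm_norm,
          inv_mul_cancel₀ hvpos.ne']
      · simp only [Set.mem_preimage, Set.mem_setOf_eq]
        have hinner : ⟪q, ‖v‖⁻¹ • v⟫ = ‖v‖⁻¹ * ⟪q, v⟫ := real_inner_smul_right _ _ _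
        rw [hinner, ← hz0]
        nlinarith [mul_le_mul_of_nonneg_left hkey (inv_nonneg.2 (norm_nonneg v)),
          inv_mul_cancel₀ hvpos.ne', inv_nonneg.2 (norm_nonneg v)]
    · rw [smul_smul, mul_inv_cancel₀ hvpos.ne', one_smul]
  -- measure computation
  have hcapm := cap_measurable q t
  have hmap : surfaceMeasure d {y : Euc d | 1 - ⟪q, y⟫ ≤ t} =
      (volume : Measure (Euc d)).toSphere
        (Subtype.val ⁻¹' {y : Euc d | 1 - ⟪q, y⟫ ≤ t}) := by
    rw [surfaceMeasure, Measure.map_apply measurable_subtype_coe hcapm]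
  rw [hmap, Measure.toSphere_apply' _ (hcapm.preimage measurable_subtype_coe)]
  have hfr : (Module.finrank ℝ (Euc d)) = d := finrank_euclideanSpace_fin
  rw [hfr]
  have hvol : volume (⇑b.repr ⁻¹' B) = volume B :=
    b.measurePreserving_repr.measure_preimage hBmeas.nullMeasurableSet
  have hmono : volume (⇑b.repr ⁻¹' B) ≤
      volume (Set.Ioo (0:ℝ) 1 • (Subtype.val '' (Subtype.val ⁻¹'
        {y : Euc d | 1 - ⟪q, y⟫ ≤ t} : Set (Metric.sphere (0 : Euc d) 1)))) :=
    measure_mono hsub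
  have hboxvol : volume B = ENNReal.ofReal (1/10) * ENNReal.ofReal (2*δ) ^ (d-1) := by
    rw [hB, volume_box]
    rw [← Finset.prod_erase_mul _ _ (Finset.mem_univ i0)]
    have h1 : bb i0 - a i0 = 1/10 := by simp [ha, hbb]; norm_num
    have h2 : ∀ j ∈ Finset.univ.erase i0, ENNReal.ofReal (bb j - a j) = ENNReal.ofReal (2*δ) := by
      intro j hj
      have hj0 : j ≠ i0 := (Finset.mem_erase.1 hj).1
      simp only [ha, hbb, if_neg hj0]
      congr 1; ring
    rw [Finset.prod_congr rfl h2, Finset.prod_const,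
      Finset.card_erase_of_mem (Finset.mem_univ i0), Finset.card_univ, Fintype.card_fin, h1,
      mul_comm]
  calc ENNReal.ofReal ((d : ℝ) * ((1 / 10) * (2 / Real.sqrt (4 * d)) ^ (d - 1))
          * t ^ (((d : ℝ) - 1) / 2))
      = (d : ℝ≥0∞) * volume B := by
        rw [hboxvol, ← ENNReal.ofReal_pow (by positivity), ← ENNReal.ofReal_mul (by norm_num),
          ← ENNReal.ofReal_natCast d, ← ENNReal.ofReal_mul (by positivity)]
        congr 1
        have h2δ : 2 * δ = (2 / Real.sqrt (4 * d)) * Real.sqrt t := by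
          rw [hδdef, Real.sqrt_div ht.le]; ring
        have hst : Real.sqrt t ^ (d - 1) = t ^ (((d : ℝ) - 1) / 2) := by
          rw [Real.sqrt_eq_rpow, ← Real.rpow_natCast (t ^ ((1:ℝ)/2)) (d-1),
            ← Real.rpow_mul ht.le]
          congr 1
          rw [Nat.cast_sub (by omega)]
          push_cast; ring
        rw [h2δ, mul_pow, hst]; ring
    _ = (d : ℝ≥0∞) * volume (⇑b.repr ⁻¹' B) := by rw [hvol]
    _ ≤ _ := mul_le_mul_right hmono _

end Geom2
section TokenLower
variable {d : ℕ}

lemma tokenLaw_cap_lower (hd : 2 ≤ d) {q : Euc d} (hq : ‖q‖ = 1)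
    {ρ : Euc d → ℝ} (hρc : Continuous ρ) (hρq : 0 < ρ q) :
    ∃ c : ℝ, 0 < c ∧ ∃ t0 : ℝ, 0 < t0 ∧ t0 ≤ 1 ∧ ∀ t : ℝ, 0 < t → t ≤ t0 →
      ENNReal.ofReal (c * t ^ (((d : ℝ) - 1) / 2)) ≤
        tokenLaw d ρ {y : Euc d | 1 - ⟪q, y⟫ ≤ t} := by
  obtain ⟨c1, hc1, hcap⟩ := sphere_cap_lower hd hq
  -- continuity neighborhood
  have hcont : ContinuousAt ρ q := hρc.continuousAt
  obtain ⟨r, hr, hball⟩ := Metric.continuousAt_iff.1 hcont (ρ q / 2) (by linarith)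
  refine ⟨ρ q / 2 * c1, by positivity, min 1 (r ^ 2 / 4), by positivity,
    min_le_left _ _, ?_⟩
  intro t ht ht0
  have ht1 : t ≤ 1 := le_trans ht0 (min_le_left _ _)
  have htr : t ≤ r ^ 2 / 4 := le_trans ht0 (min_le_right _ _)
  have hcapm := cap_measurable q t
  -- density lower bound on the cap (for points on the sphere)
  have hρlow : ∀ z : Metric.sphere (0 : Euc d) 1,
      (z : Euc d) ∈ {y : Euc d | 1 - ⟪q, y⟫ ≤ t} → ρ q / 2 ≤ ρ (z : Euc d) := by
    intro z hz
    have hz1 : ‖(z : Euc d)‖ = 1 := mem_sphere_zero_iff_norm.1 z.2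
    have hdist : dist (z : Euc d) q < r := by
      have hsq : dist (z : Euc d) q ^ 2 = 2 * (1 - ⟪q, (z : Euc d)⟫) := by
        rw [dist_eq_norm, norm_sub_sq_real, hz1, hq, real_inner_comm]
        ring
      have h2 : dist (z : Euc d) q ^ 2 ≤ 2 * t := by
        rw [hsq]; have := hz; simp only [Set.mem_setOf_eq] at this; linarith
      nlinarith [dist_nonneg (x := (z : Euc d)) (y := q), hr]
    have := hball hdist
    rw [Real.dist_eq] at this
    have := abs_lt.1 this
    linarith [this.1]
  -- rewrite tokenLaw as an integral over the sphere measure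
  rw [tokenLaw, withDensity_apply _ hcapm]
  rw [surfaceMeasure, Measure.restrict_map measurable_subtype_coe hcapm,
    lintegral_map (by fun_prop) measurable_subtype_coe]
  have hlow : ENNReal.ofReal (ρ q / 2) *
      ((volume : Measure (Euc d)).toSphere (Subtype.val ⁻¹' {y : Euc d | 1 - ⟪q, y⟫ ≤ t}))
      ≤ ∫⁻ z, ENNReal.ofReal (ρ (z : Euc d))
          ∂((volume : Measure (Euc d)).toSphere.restrict
            (Subtype.val ⁻¹' {y : Euc d | 1 - ⟪q, y⟫ ≤ t})) := by
    rw [← setLIntegral_const]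
    refine setLIntegral_mono (by fun_prop) ?_
    intro z hz
    exact ENNReal.ofReal_le_ofReal (hρlow z hz)
  refine le_trans ?_ hlow
  have hσ : ENNReal.ofReal (c1 * t ^ (((d : ℝ) - 1) / 2)) ≤
      (volume : Measure (Euc d)).toSphere (Subtype.val ⁻¹' {y : Euc d | 1 - ⟪q, y⟫ ≤ t}) := by
    have := hcap t ht ht1
    rwa [surfaceMeasure, Measure.map_apply measurable_subtype_coe hcapm] at this
  calc ENNReal.ofReal (ρ q / 2 * c1 * t ^ (((d : ℝ) - 1) / 2))
      = ENNReal.ofReal (ρ q / 2) * ENNReal.ofReal (c1 * t ^ (((d : ℝ) - 1) / 2)) := by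
        rw [← ENNReal.ofReal_mul (by positivity)]; ring_nf
    _ ≤ _ := mul_le_mul_right hσ _

end TokenLower
section Det
variable {d : ℕ} {Ω : Type*} [MeasurableSpace Ω]

lemma dtq_nonneg {q : Euc d} (hq : ‖q‖ = 1) {x : ℕ → Ω → Euc d}
    (hx1 : ∀ i ω, ‖x i ω‖ = 1) (j : ℕ) (ω : Ω) : 0 ≤ dtq d q x j ω := by
  have h := real_inner_le_norm q (x j ω)
  rw [hq, hx1 j ω] at h
  simp only [dtq]; linarith

lemma blocks_biUnion (M L : ℕ) (hL : 1 ≤ L) :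
    (Finset.range M).biUnion (fun b => Finset.Ico (b * L) ((b + 1) * L)) =
      Finset.range (M * L) := by
  ext j
  simp only [Finset.mem_biUnion, Finset.mem_range, Finset.mem_Ico]
  constructor
  · rintro ⟨b, hb, h1, h2⟩
    calc j < (b + 1) * L := h2
      _ ≤ M * L := Nat.mul_le_mul_right L hb
  · intro hj
    refine ⟨j / L, ?_, Nat.div_mul_le_self j L, ?_⟩
    · rwa [Nat.div_lt_iff_lt_mul (by omega)]
    · have h1 := Nat.div_add_mod j L
      have h2 := Nat.mod_lt j (show 0 < L by omega)
      have h3 : j < L * (j / L) + L := by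
        conv_lhs => rw [← h1]
        exact Nat.add_lt_add_left h2 _
      rw [add_mul, one_mul, Nat.mul_comm (j / L) L]
      exact h3

lemma attn_le_of_blocks {q : Euc d} (hq : ‖q‖ = 1) {x : ℕ → Ω → Euc d}
    (hx1 : ∀ i ω, ‖x i ω‖ = 1) {β : ℕ → ℝ} (hβpos : ∀ n, 0 < β n)
    {n M L : ℕ} (hM : 1 ≤ M) (hL : 1 ≤ L) (hML : M * L ≤ n)
    {u : ℝ} (hu : β n * u ≤ 1) {ω : Ω}
    (hblocks : ∀ b < M, ∃ j ∈ Finset.Ico (b * L) ((b + 1) * L), dtq d q x j ω ≤ u) :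
    ∀ j : ℕ, attn d β q x n j ω ≤ Real.exp 1 / M := by
  have hψnn : ∀ j, 0 ≤ Real.exp (-(β n * dtq d q x j ω)) := fun j => (Real.exp_pos _).le
  have hZ : (M : ℝ) * Real.exp (-1) ≤ zfun d β q x n ω := by
    have hsumM : (M : ℝ) * Real.exp (-1) ≤
        ∑ b ∈ Finset.range M, ∑ j ∈ Finset.Ico (b * L) ((b + 1) * L),
          Real.exp (-(β n * dtq d q x j ω)) := by
      calc ((M : ℝ) * Real.exp (-1)) = ∑ _b ∈ Finset.range M, Real.exp (-1) := by
            rw [Finset.sum_const, Finset.card_range, nsmul_eq_mul]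
        _ ≤ ∑ b ∈ Finset.range M, ∑ j ∈ Finset.Ico (b * L) ((b + 1) * L),
            Real.exp (-(β n * dtq d q x j ω)) := by
          refine Finset.sum_le_sum fun b hb => ?_
          obtain ⟨j, hjmem, hju⟩ := hblocks b (Finset.mem_range.1 hb)
          calc Real.exp (-1) ≤ Real.exp (-(β n * dtq d q x j ω)) := by
                refine Real.exp_le_exp.2 ?_
                have h1 : β n * dtq d q x j ω ≤ β n * u :=
                  mul_le_mul_of_nonneg_left hju (hβpos n).le
                linarith
            _ ≤ _ := Finset.single_le_sum (fun k _ => hψnn k) hjmem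
    have hdisj : ∀ b1 ∈ Finset.range M, ∀ b2 ∈ Finset.range M, b1 ≠ b2 →
        Disjoint (Finset.Ico (b1 * L) ((b1 + 1) * L)) (Finset.Ico (b2 * L) ((b2 + 1) * L)) := by
      intro b1 _ b2 _ hne
      refine Finset.disjoint_left.2 fun j hj1 hj2 => ?_
      simp only [Finset.mem_Ico] at hj1 hj2
      rcases Nat.lt_or_ge b1 b2 with h | h
      · have : (b1 + 1) * L ≤ b2 * L := Nat.mul_le_mul_right L h
        omega
      · have hlt : b2 < b1 := by omega
        have : (b2 + 1) * L ≤ b1 * L := Nat.mul_le_mul_right L hlt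
        omega
    rw [← Finset.sum_biUnion hdisj, blocks_biUnion M L hL] at hsumM
    calc (M : ℝ) * Real.exp (-1) ≤ _ := hsumM
      _ ≤ zfun d β q x n ω := by
        refine Finset.sum_le_sum_of_subset_of_nonneg ?_ (fun j _ _ => hψnn j)
        exact Finset.range_subset_range.2 hML
  intro j
  have hZpos : (0 : ℝ) < zfun d β q x n ω := by
    have : (0:ℝ) < (M : ℝ) * Real.exp (-1) := by positivity
    linarith
  have hnum : Real.exp (-(β n * dtq d q x j ω)) ≤ 1 := by
    rw [Real.exp_le_one_iff]
    have := mul_nonneg (hβpos n).le (dtq_nonneg hq hx1 j ω)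
    linarith
  have hM0 : (0:ℝ) < M := by exact_mod_cast hM
  rw [attn, div_le_iff₀ hZpos]
  calc Real.exp (-(β n * dtq d q x j ω)) ≤ 1 := hnum
    _ = Real.exp 1 / (M : ℝ) * ((M : ℝ) * Real.exp (-1)) := by
      rw [Real.exp_neg]
      field_simp
    _ ≤ Real.exp 1 / (M : ℝ) * zfun d β q x n ω :=
      mul_le_mul_of_nonneg_left hZ (by positivity)

lemma abs_ordDesc_le {n : ℕ} (w : Fin n → ℝ) (B : ℝ) (hB : 0 ≤ B)
    (h : ∀ j, 0 ≤ w j ∧ w j ≤ B) (k : ℕ) : |ordDesc w k| ≤ B := by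
  rw [ordDesc]
  split
  · rename_i hk
    set j := (Tuple.sort w) (Fin.rev ⟨k - 1, hk⟩)
    rw [Function.comp_apply, abs_of_nonneg (h _).1]
    exact (h _).2
  · simpa using hB

end Det
section Tendsto1
variable {d : ℕ}

lemma tendsto_n_mul_u_pow (hd : 2 ≤ d) {β : ℕ → ℝ} (hβpos : ∀ n, 0 < β n)
    (hsub : Tendsto (fun n : ℕ => β n * (n : ℝ) ^ (-(alpha d))) atTop (𝓝 0))
    {t0 : ℝ} (ht0 : 0 < t0) :
    Tendsto (fun n : ℕ => (n : ℝ) * (min (1 / β n) t0) ^ (((d : ℝ) - 1) / 2))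
      atTop atTop := by
  set κ : ℝ := ((d : ℝ) - 1) / 2 with hκdef
  have hd1 : (0:ℝ) < (d : ℝ) - 1 := by
    have : (2:ℝ) ≤ d := by exact_mod_cast hd
    linarith
  have hκ : 0 < κ := by positivity
  -- first factor tendsto
  have hw : Tendsto (fun n : ℕ => β n * (n : ℝ) ^ (-(alpha d))) atTop (𝓝[>] 0) := by
    rw [tendsto_nhdsWithin_iff]
    refine ⟨hsub, ?_⟩
    filter_upwards [eventually_ge_atTop 1] with n hn
    have hn0 : (0:ℝ) < n := by exact_mod_cast hn
    have : (0:ℝ) < (n : ℝ) ^ (-(alpha d)) := Real.rpow_pos_of_pos hn0 _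
    exact mul_pos (hβpos n) this
  have hinv : Tendsto (fun n : ℕ => (β n * (n : ℝ) ^ (-(alpha d)))⁻¹) atTop atTop :=
    tendsto_inv_nhdsGT_zero.comp hw
  have h1 : Tendsto (fun n : ℕ => (n : ℝ) * (1 / β n) ^ κ) atTop atTop := by
    refine Tendsto.congr' ?_ ((tendsto_rpow_atTop hκ).comp hinv)
    filter_upwards [eventually_ge_atTop 1] with n hn
    have hn0 : (0:ℝ) < n := by exact_mod_cast hn
    have hβn := hβpos n
    have hακ : alpha d * κ = 1 := by
      rw [alpha, hκdef]; field_simp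
    have hrw : (β n * (n : ℝ) ^ (-(alpha d)))⁻¹ = (1 / β n) * (n : ℝ) ^ (alpha d) := by
      rw [Real.rpow_neg hn0.le, mul_inv, inv_inv]
      ring
    rw [Function.comp_apply, hrw, Real.mul_rpow (by positivity) (by positivity)]
    have hnn : ((n:ℝ) ^ alpha d) ^ κ = (n : ℝ) := by
      rw [← Real.rpow_mul hn0.le, hακ, Real.rpow_one]
    rw [hnn]; ring
  have h2 : Tendsto (fun n : ℕ => (n : ℝ) * t0 ^ κ) atTop atTop :=
    tendsto_natCast_atTop_atTop.atTop_mul_const (Real.rpow_pos_of_pos ht0 _)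
  rw [tendsto_atTop] at h1 h2 ⊢
  intro K
  filter_upwards [h1 K, h2 K] with n hn1 hn2
  rcases min_cases (1 / β n) t0 with ⟨hmin, _⟩ | ⟨hmin, _⟩
  · rw [hmin]; exact hn1
  · rw [hmin]; exact hn2

end Tendsto1

/-- **Subcritical vanishing of individual weights.** If `β_n n^{-α} → 0` as `n → ∞`
(with `α = 2/(d-1)`), then for every fixed `i ≥ 1`, `A_{(i)} → 0` in probability. -/
theorem subcritical_attention_weights_vanish
    {d : ℕ} (hd : 2 ≤ d) {q : Euc d} (hq : ‖q‖ = 1)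
    {ρ : Euc d → ℝ} (hρC2 : ContDiff ℝ 2 ρ) (hρnn : ∀ y, 0 ≤ ρ y) (hρq : 0 < ρ q)
    (P : Measure Ω) [IsProbabilityMeasure P]
    {x : ℕ → Ω → Euc d} (hx : IsIIDTokens d P ρ x)
    {β : ℕ → ℝ} (hβpos : ∀ n, 0 < β n)
    (hsub : Tendsto (fun n : ℕ => β n * (n : ℝ) ^ (-(alpha d))) atTop (𝓝 0)) :
    ∀ i : ℕ, 1 ≤ i →
      TendstoInMeasure P (fun n ω => attnOrd d β q x n i ω) atTop (fun _ => 0) := by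
  obtain ⟨hxm, hx1, hxlaw, hxind⟩ := hx
  obtain ⟨c, hc, t0, ht0, ht01, hlow⟩ := tokenLaw_cap_lower hd hq hρC2.continuous hρq
  intro i _
  rw [tendstoInMeasure_iff_dist]
  intro ε hε
  set κ : ℝ := ((d : ℝ) - 1) / 2 with hκdef
  -- choose M
  set M : ℕ := ⌊Real.exp 1 / ε⌋₊ + 1 with hMdef
  have hM1 : 1 ≤ M := Nat.le_add_left 1 _
  have hM0 : (0:ℝ) < M := by exact_mod_cast hM1
  have hMε : Real.exp 1 / (M : ℝ) < ε := by
    have h1 : Real.exp 1 / ε < M := by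
      have := Nat.lt_floor_add_one (Real.exp 1 / ε)
      exact_mod_cast this
    rw [div_lt_iff₀ hM0]
    have := mul_lt_mul_of_pos_right h1 hε
    calc Real.exp 1 = Real.exp 1 / ε * ε := by field_simp
      _ < (M : ℝ) * ε := this
      _ = ε * M := by ring
  -- basic quantities
  set u : ℕ → ℝ := fun n => min (1 / β n) t0 with hudef
  have hu_pos : ∀ n, 0 < u n := fun n => lt_min (one_div_pos.2 (hβpos n)) ht0
  have hu_le : ∀ n, u n ≤ t0 := fun n => min_le_right _ _
  have hβu : ∀ n, β n * u n ≤ 1 := by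
    intro n
    calc β n * u n ≤ β n * (1 / β n) :=
          mul_le_mul_of_nonneg_left (min_le_left _ _) (hβpos n).le
      _ = 1 := by rw [mul_one_div, div_self (hβpos n).ne']
  set r : ℕ → ℝ := fun n => c * u n ^ κ with hrdef
  have hr_pos : ∀ n, 0 < r n := fun n =>
    mul_pos hc (Real.rpow_pos_of_pos (hu_pos n) _)
  have hr_le : ∀ n, r n ≤ c * t0 ^ κ := by
    intro n
    have hκ0 : (0:ℝ) ≤ κ := by
      have : (2:ℝ) ≤ d := by exact_mod_cast hd
      rw [hκdef]; linarith
    exact mul_le_mul_of_nonneg_left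
      (Real.rpow_le_rpow (hu_pos n).le (hu_le n) hκ0) hc.le
  -- bad events
  set E : ℕ → ℕ → Set Ω := fun n j => {ω | u n < dtq d q x j ω} with hEdef
  -- Step 1: inclusion
  have hincl : ∀ n : ℕ, M ≤ n →
      {ω | ε ≤ dist (attnOrd d β q x n i ω) 0} ⊆
        ⋃ b ∈ Finset.range M, ⋂ j ∈ Finset.Ico (b * (n / M)) ((b + 1) * (n / M)), E n j := by
    intro n hn ω hω
    by_contra hnot
    simp only [Set.mem_iUnion, Set.mem_iInter, not_exists, not_forall, hEdef,
      Set.mem_setOf_eq, not_lt] at hnot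
    have hblocks : ∀ b < M, ∃ j ∈ Finset.Ico (b * (n / M)) ((b + 1) * (n / M)),
        dtq d q x j ω ≤ u n := by
      intro b hb
      obtain ⟨j, hj1, hj2⟩ := hnot b (Finset.mem_range.2 hb)
      exact ⟨j, hj1, hj2⟩
    have hL1 : 1 ≤ n / M := (Nat.one_le_div_iff (by omega)).2 hn
    have hML : M * (n / M) ≤ n := by
      calc M * (n / M) = n / M * M := Nat.mul_comm _ _
        _ ≤ n := Nat.div_mul_le_self n M
    have hall := attn_le_of_blocks hq hx1 hβpos hM1 hL1 hML (hβu n) hblocks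
    have habs : |attnOrd d β q x n i ω| ≤ Real.exp 1 / M := by
      refine abs_ordDesc_le _ _ (by positivity) (fun j => ⟨?_, hall j⟩) i
      exact div_nonneg (Real.exp_pos _).le (by
        refine Finset.sum_nonneg fun k _ => (Real.exp_pos _).le)
    simp only [Set.mem_setOf_eq] at hω
    rw [dist_zero_right, Real.norm_eq_abs] at hω
    linarith
  -- Step 2+3+4: measure of one block event
  have hprob : IsProbabilityMeasure (tokenLaw d ρ) := by
    rw [← hxlaw 0]
    exact Measure.isProbabilityMeasure_map (hxm 0).aemeasurable
  have hfactor : ∀ n j, P (E n j) ≤ ENNReal.ofReal (Real.exp (-(r n))) := by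
    intro n j
    have hSm : MeasurableSet {y : Euc d | 1 - ⟪q, y⟫ ≤ u n} := cap_measurable q (u n)
    have hEeq : E n j = x j ⁻¹' {y : Euc d | 1 - ⟪q, y⟫ ≤ u n}ᶜ := by
      ext ω
      simp only [hEdef, Set.mem_setOf_eq, Set.mem_preimage, Set.mem_compl_iff, not_le, dtq]
    rw [hEeq, ← Measure.map_apply (hxm j) hSm.compl, hxlaw j,
      prob_compl_eq_one_sub hSm]
    have h1 : ENNReal.ofReal (r n) ≤ tokenLaw d ρ {y : Euc d | 1 - ⟪q, y⟫ ≤ u n} :=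
      hlow (u n) (hu_pos n) (hu_le n)
    calc (1 : ℝ≥0∞) - tokenLaw d ρ {y : Euc d | 1 - ⟪q, y⟫ ≤ u n}
        ≤ 1 - ENNReal.ofReal (r n) := tsub_le_tsub_left h1 _
      _ = ENNReal.ofReal (1 - r n) := by
          rw [ENNReal.ofReal_sub _ (hr_pos n).le, ENNReal.ofReal_one]
      _ ≤ ENNReal.ofReal (Real.exp (-(r n))) := by
          refine ENNReal.ofReal_le_ofReal ?_
          have := Real.add_one_le_exp (-(r n))
          linarith
  have hblockP : ∀ n b, P (⋂ j ∈ Finset.Ico (b * (n / M)) ((b + 1) * (n / M)), E n j) ≤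
      ENNReal.ofReal (Real.exp (-(((n / M : ℕ) : ℝ) * r n))) := by
    intro n b
    have hmeas : ∀ j ∈ Finset.Ico (b * (n / M)) ((b + 1) * (n / M)),
        MeasurableSet[(inferInstance : MeasurableSpace (Euc d)).comap (x j)] (E n j) := by
      intro j _
      refine ⟨{y : Euc d | 1 - ⟪q, y⟫ ≤ u n}ᶜ, (cap_measurable q (u n)).compl, ?_⟩
      ext ω
      simp only [hEdef, Set.mem_setOf_eq, Set.mem_preimage, Set.mem_compl_iff, not_le, dtq]
    rw [hxind.meas_biInter hmeas]
    have hcard : (Finset.Ico (b * (n / M)) ((b + 1) * (n / M))).card = n / M := by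
      rw [Nat.card_Ico, Nat.succ_mul, Nat.add_sub_cancel_left]
    calc ∏ j ∈ Finset.Ico (b * (n / M)) ((b + 1) * (n / M)), P (E n j)
        ≤ ∏ _j ∈ Finset.Ico (b * (n / M)) ((b + 1) * (n / M)),
            ENNReal.ofReal (Real.exp (-(r n))) :=
          Finset.prod_le_prod' fun j _ => hfactor n j
      _ = ENNReal.ofReal (Real.exp (-(r n))) ^ (n / M) := by
          rw [Finset.prod_const, hcard]
      _ = ENNReal.ofReal (Real.exp (-(r n)) ^ (n / M)) := by
          rw [ENNReal.ofReal_pow (Real.exp_pos _).le]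
      _ = ENNReal.ofReal (Real.exp (-(((n / M : ℕ) : ℝ) * r n))) := by
          congr 1
          rw [← Real.exp_nat_mul]
          congr 1
          ring
  -- Step 5: total bound
  have htotal : ∀ n : ℕ, M ≤ n →
      P {ω | ε ≤ dist (attnOrd d β q x n i ω) 0} ≤
        (M : ℝ≥0∞) * ENNReal.ofReal (Real.exp (-(((n / M : ℕ) : ℝ) * r n))) := by
    intro n hn
    calc P {ω | ε ≤ dist (attnOrd d β q x n i ω) 0}
        ≤ P (⋃ b ∈ Finset.range M, ⋂ j ∈ Finset.Ico (b * (n / M)) ((b + 1) * (n / M)), E n j) :=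
          measure_mono (hincl n hn)
      _ ≤ ∑ b ∈ Finset.range M,
            P (⋂ j ∈ Finset.Ico (b * (n / M)) ((b + 1) * (n / M)), E n j) :=
          measure_biUnion_finset_le _ _
      _ ≤ ∑ _b ∈ Finset.range M, ENNReal.ofReal (Real.exp (-(((n / M : ℕ) : ℝ) * r n))) :=
          Finset.sum_le_sum fun b _ => hblockP n b
      _ = (M : ℝ≥0∞) * ENNReal.ofReal (Real.exp (-(((n / M : ℕ) : ℝ) * r n))) := by
          rw [Finset.sum_const, Finset.card_range, nsmul_eq_mul]
  -- Step 6: the bound tends to 0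
  have hLr : Tendsto (fun n : ℕ => ((n / M : ℕ) : ℝ) * r n) atTop atTop := by
    have hnu := tendsto_n_mul_u_pow hd hβpos hsub ht0
    have hg : Tendsto (fun n : ℕ =>
        c / M * ((n : ℝ) * u n ^ κ) - c * t0 ^ κ) atTop atTop := by
      refine tendsto_atTop_add_const_right _ _ ?_
      exact (tendsto_const_mul_atTop_of_pos (by positivity)).2 hnu
    refine tendsto_atTop_mono ?_ hg
    intro n
    have hLlb : (n : ℝ) / M - 1 ≤ ((n / M : ℕ) : ℝ) := by
      have h1 := Nat.div_add_mod n M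
      have h2 := Nat.mod_lt n (show 0 < M by omega)
      have h3 : (M : ℝ) * ((n / M : ℕ) : ℝ) + ((n % M : ℕ) : ℝ) = (n : ℝ) := by
        exact_mod_cast h1
      have h4 : ((n % M : ℕ) : ℝ) < M := by exact_mod_cast h2
      rw [div_sub_one hM0.ne', div_le_iff₀ hM0]
      nlinarith [mul_comm (M : ℝ) ((n / M : ℕ) : ℝ)]
    have hrn := hr_pos n
    have hrle := hr_le n
    calc c / M * ((n : ℝ) * u n ^ κ) - c * t0 ^ κ
        ≤ 1 / M * ((n : ℝ) * r n) - r n := by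
          have : c / M * ((n : ℝ) * u n ^ κ) = 1 / M * ((n : ℝ) * r n) := by
            rw [hrdef]; ring
          rw [this]
          linarith
      _ = ((n : ℝ) / M - 1) * r n := by ring
      _ ≤ ((n / M : ℕ) : ℝ) * r n := mul_le_mul_of_nonneg_right hLlb hrn.le
  have hexp : Tendsto (fun n : ℕ => Real.exp (-(((n / M : ℕ) : ℝ) * r n))) atTop (𝓝 0) :=
    Real.tendsto_exp_atBot.comp (tendsto_neg_atBot_iff.2 hLr)
  have hof : Tendsto (fun n : ℕ => ENNReal.ofReal (Real.exp (-(((n / M : ℕ) : ℝ) * r n))))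
      atTop (𝓝 0) := by
    have := ENNReal.tendsto_ofReal (a := 0) hexp
    rwa [ENNReal.ofReal_zero] at this
  have hmul : Tendsto (fun n : ℕ =>
      (M : ℝ≥0∞) * ENNReal.ofReal (Real.exp (-(((n / M : ℕ) : ℝ) * r n)))) atTop (𝓝 0) := by
    have := ENNReal.Tendsto.const_mul (a := (M : ℝ≥0∞)) hof
      (Or.inr (ENNReal.natCast_ne_top M))
    rwa [mul_zero] at this
  refine tendsto_of_tendsto_of_tendsto_of_le_of_le' tendsto_const_nhds hmul
    (Filter.Eventually.of_forall fun n => zero_le) ?_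
  filter_upwards [eventually_ge_atTop M] with n hn
  exact htotal n hn

end AttnScaling
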